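/- For every k ≥ 2 and every m ≥ 2, there exists a 3-way (v,k,1) Steiner trade of volume m (on some v-set); and there is no 3-way (v,k,1) trade of volume 1. Hence S_3s(1,k) = ℕ \ {1}. -/
import Mathlib


/-- The blocks of a collection `Ti` that contain a given subset `S`. -/
def blocksContaining (Ti : Finset (Finset ℕ)) (S : Finset ℕ) : Finset (Finset ℕ) :=
  Ti.filter (fun B => S ⊆ B)

/-- `T` is a μ-way (v,k,t) trade of volume `m` with point set `V`:
μ pairwise disjoint collections, each of `m` k-subsets of the v-set `V`,
such that every t-subset of `V` is contained in the same number of blocks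
of each collection. -/
structure IsTrade (μ v k t m : ℕ) (V : Finset ℕ) (T : Fin μ → Finset (Finset ℕ)) : Prop where
  cardV : V.card = v
  volume : ∀ i, (T i).card = m
  blockSub : ∀ i, ∀ B ∈ T i, B ⊆ V
  blockCard : ∀ i, ∀ B ∈ T i, B.card = k
  disj : ∀ i j, i ≠ j → Disjoint (T i) (T j)
  balanced : ∀ S : Finset ℕ, S.card = t → ∀ i j,
    (blocksContaining (T i) S).card = (blocksContaining (T j) S).card

/-- A μ-way (v,k,t) Steiner trade: a trade in which every t-subset occurs
at most once in each collection. -/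
def IsSteinerTrade (μ v k t m : ℕ) (V : Finset ℕ) (T : Fin μ → Finset (Finset ℕ)) : Prop :=
  IsTrade μ v k t m V T ∧
  ∀ S : Finset ℕ, S.card = t → ∀ i, (blocksContaining (T i) S).card ≤ 1

/-- The foundation of a μ-way trade: the union of all its blocks. -/
def foundation {μ : ℕ} (T : Fin μ → Finset (Finset ℕ)) : Finset ℕ :=
  Finset.univ.biUnion (fun i => (T i).biUnion id)

/-- `T` is t-solely balanced: no two distinct collections contain a common
(t+1)-subset. -/
def SolelyBalanced {μ : ℕ} (t : ℕ) (T : Fin μ → Finset (Finset ℕ)) : Prop :=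
  ∀ i j : Fin μ, i ≠ j → ∀ S : Finset ℕ, S.card = t + 1 →
    ¬ ((∃ B ∈ T i, S ⊆ B) ∧ (∃ B ∈ T j, S ⊆ B))

/-- S_3s(1,k) = ℕ \ {1}: for every k ≥ 2 and every m ≥ 2 there exists a 3-way
(v,k,1) Steiner trade of volume m, and there is no 3-way (v,k,1) trade of
volume 1. -/

def pad3 (m k r : ℕ) : Finset ℕ := Finset.Ico (2*m + r*(k-2)) (2*m + r*(k-2) + (k-2))

def pr3 (m : ℕ) (i : Fin 3) (r : ℕ) : Finset ℕ :=
  if i.val = 0 then {2*r, 2*r+1}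
  else if i.val = 1 then {2*r+1, (2*r+2) % (2*m)}
  else {r, r+m}

def blk3 (m k : ℕ) (i : Fin 3) (r : ℕ) : Finset ℕ := pr3 m i r ∪ pad3 m k r

lemma mod3 {m r : ℕ} (hr : r < m) :
    (2*r+2) % (2*m) = if r+1 = m then 0 else 2*r+2 := by
  split
  · next h =>
    have h2 : 2*r+2 = 2*m := by omega
    simp [h2]
  · exact Nat.mod_eq_of_lt (by omega)

lemma pr3_mem {m : ℕ} (i : Fin 3) {r x : ℕ} (hr : r < m) (hx : x ∈ pr3 m i r) : x < 2*m := by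
  fin_cases i <;> simp [pr3, mod3 hr] at hx <;> (try split_ifs at hx) <;> omega

lemma pad3_mem {m k r x : ℕ} (hx : x ∈ pad3 m k r) :
    2*m + r*(k-2) ≤ x ∧ x < 2*m + r*(k-2) + (k-2) := by
  simpa [pad3, Finset.mem_Ico] using hx

lemma pad3_uniq {m k r r' x : ℕ} (h : x ∈ pad3 m k r) (h' : x ∈ pad3 m k r') : r = r' := by
  obtain ⟨h1, h2⟩ := pad3_mem h
  obtain ⟨h1', h2'⟩ := pad3_mem h'
  rcases Nat.lt_trichotomy r r' with hlt | he | hlt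
  · exfalso
    have hmul : (r+1)*(k-2) ≤ r'*(k-2) := Nat.mul_le_mul_right _ (by omega)
    have e : (r+1)*(k-2) = r*(k-2) + (k-2) := by ring
    linarith
  · exact he
  · exfalso
    have hmul : (r'+1)*(k-2) ≤ r*(k-2) := Nat.mul_le_mul_right _ (by omega)
    have e : (r'+1)*(k-2) = r'*(k-2) + (k-2) := by ring
    linarith

lemma blk3_uniq {m k : ℕ} (i : Fin 3) {r r' x : ℕ}
    (hr : r < m) (hr' : r' < m) (h : x ∈ blk3 m k i r) (h' : x ∈ blk3 m k i r') : r = r' := by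
  rw [blk3, Finset.mem_union] at h h'
  rcases h with h | h <;> rcases h' with h' | h'
  · fin_cases i <;> simp [pr3, mod3 hr, mod3 hr'] at h h' <;>
      (try split_ifs at h h') <;> omega
  · exfalso; have := pr3_mem i hr h; have := (pad3_mem h').1; omega
  · exfalso; have := pr3_mem i hr' h'; have := (pad3_mem h).1; omega
  · exact pad3_uniq h h'

lemma blk3_inter {m k : ℕ} (i : Fin 3) {r : ℕ} (hr : r < m) :
    (blk3 m k i r) ∩ Finset.range (2*m) = pr3 m i r := by
  ext x
  simp only [Finset.mem_inter, blk3, Finset.mem_union, Finset.mem_range]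
  constructor
  · rintro ⟨h1 | h1, h2⟩
    · exact h1
    · exact absurd (pad3_mem h1).1 (by omega)
  · intro hx
    exact ⟨Or.inl hx, pr3_mem i hr hx⟩

lemma fpair_eq {a b c d : ℕ} (h : ({a,b}:Finset ℕ) = {c,d}) :
    (a = c ∨ a = d) ∧ (b = c ∨ b = d) ∧ (c = a ∨ c = b) ∧ (d = a ∨ d = b) := by
  have h1 : a ∈ ({c,d}:Finset ℕ) := h ▸ Finset.mem_insert_self a {b}
  have h2 : b ∈ ({c,d}:Finset ℕ) := h ▸ Finset.mem_insert_of_mem (Finset.mem_singleton_self b)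
  have h3 : c ∈ ({a,b}:Finset ℕ) := h ▸ Finset.mem_insert_self c {d}
  have h4 : d ∈ ({a,b}:Finset ℕ) := h ▸ Finset.mem_insert_of_mem (Finset.mem_singleton_self d)
  simp only [Finset.mem_insert, Finset.mem_singleton] at h1 h2 h3 h4
  exact ⟨h1, h2, h3, h4⟩

lemma pr3_ne {m : ℕ} (hm : 2 ≤ m) {i j : Fin 3} (hij : i ≠ j) {r r' : ℕ}
    (hr : r < m) (hr' : r' < m) : pr3 m i r ≠ pr3 m j r' := by
  intro h
  fin_cases i <;> fin_cases j <;>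
    first
      | exact absurd rfl hij
      | (norm_num [pr3, mod3 hr, mod3 hr'] at h
         obtain ⟨A, B, C, D⟩ := fpair_eq h
         (try split_ifs at A B C D) <;> omega)

lemma blk3_ne {m k : ℕ} (hm : 2 ≤ m) {i j : Fin 3} (hij : i ≠ j) {r r' : ℕ}
    (hr : r < m) (hr' : r' < m) : blk3 m k i r ≠ blk3 m k j r' := by
  intro h
  apply pr3_ne hm hij hr hr'
  rw [← blk3_inter (k := k) i hr, ← blk3_inter (k := k) j hr', h]

lemma pr3_nonempty {m : ℕ} (i : Fin 3) (r : ℕ) : (pr3 m i r).Nonempty := by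
  fin_cases i <;> simp [pr3]

lemma blk3_inj {m k : ℕ} (i : Fin 3) {r r' : ℕ} (hr : r < m) (hr' : r' < m)
    (h : blk3 m k i r = blk3 m k i r') : r = r' := by
  obtain ⟨x, hx⟩ := pr3_nonempty (m := m) i r
  have h1 : x ∈ blk3 m k i r := Finset.mem_union_left _ hx
  exact blk3_uniq i hr hr' h1 (h ▸ h1)

lemma blk3_card {m k : ℕ} (hm : 2 ≤ m) (hk : 2 ≤ k) (i : Fin 3) {r : ℕ} (hr : r < m) :
    (blk3 m k i r).card = k := by
  have hd : Disjoint (pr3 m i r) (pad3 m k r) := by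
    rw [Finset.disjoint_left]
    intro x hx hx'
    have := pr3_mem i hr hx
    have := (pad3_mem hx').1
    omega
  rw [blk3, Finset.card_union_of_disjoint hd, pad3, Nat.card_Ico]
  have h2 : (pr3 m i r).card = 2 := by
    fin_cases i
    · show ({2*r, 2*r+1} : Finset ℕ).card = 2
      exact Finset.card_pair (by omega)
    · show ({2*r+1, (2*r+2) % (2*m)} : Finset ℕ).card = 2
      refine Finset.card_pair ?_
      rw [mod3 hr]; split_ifs <;> omega
    · show ({r, r+m} : Finset ℕ).card = 2
      exact Finset.card_pair (by omega)
  rw [h2]; omega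

lemma blk3_subset {m k : ℕ} (i : Fin 3) {r : ℕ} (hr : r < m) :
    blk3 m k i r ⊆ Finset.range (2*m + m*(k-2)) := by
  intro x hx
  rw [blk3, Finset.mem_union] at hx
  rw [Finset.mem_range]
  rcases hx with hx | hx
  · have := pr3_mem i hr hx; omega
  · obtain ⟨h1, h2⟩ := pad3_mem hx
    have hmul : (r+1)*(k-2) ≤ m*(k-2) := Nat.mul_le_mul_right _ (by omega)
    have e : (r+1)*(k-2) = r*(k-2) + (k-2) := by ring
    linarith

lemma exists_blk {m k : ℕ} (hm : 2 ≤ m) (hk : 2 ≤ k) (i : Fin 3) {x : ℕ}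
    (hx : x < 2*m + m*(k-2)) : ∃ r, r < m ∧ x ∈ blk3 m k i r := by
  by_cases hx2 : x < 2*m
  · fin_cases i
    · refine ⟨x/2, by omega, Finset.mem_union_left _ ?_⟩
      simp [pr3]; omega
    · by_cases hpar : x % 2 = 1
      · refine ⟨x/2, by omega, Finset.mem_union_left _ ?_⟩
        have hr : x/2 < m := by omega
        simp [pr3, mod3 hr]
        (try split_ifs) <;> omega
      · by_cases h0 : x = 0
        · refine ⟨m-1, by omega, Finset.mem_union_left _ ?_⟩
          have hr : m-1 < m := by omega
          simp [pr3, mod3 hr]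
          (try split_ifs) <;> omega
        · refine ⟨x/2-1, by omega, Finset.mem_union_left _ ?_⟩
          have hr : x/2-1 < m := by omega
          simp [pr3, mod3 hr]
          (try split_ifs) <;> omega
    · refine ⟨if x < m then x else x - m, by split_ifs <;> omega, Finset.mem_union_left _ ?_⟩
      simp [pr3]; split_ifs <;> omega
  · have hk3 : 3 ≤ k := by
      rcases Nat.lt_or_ge k 3 with h | h
      · exfalso; have : k = 2 := by omega
        subst this; simp at hx; omega
      · exact h
    refine ⟨(x - 2*m)/(k-2), ?_, Finset.mem_union_right _ ?_⟩
    · apply Nat.div_lt_of_lt_mul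
      have : m * (k-2) = (k-2) * m := by ring
      omega
    · rw [pad3, Finset.mem_Ico]
      have e := Nat.div_add_mod (x - 2*m) (k-2)
      have hlt := Nat.mod_lt (x - 2*m) (y := k-2) (by omega)
      have e2 : (x - 2*m)/(k-2)*(k-2) = (k-2) * ((x - 2*m)/(k-2)) := by ring
      omega

lemma count_blk {m k : ℕ} (hm : 2 ≤ m) (hk : 2 ≤ k) (i : Fin 3) (x : ℕ) :
    (((Finset.range m).image (blk3 m k i)).filter (fun B => x ∈ B)).card
      = if x < 2*m + m*(k-2) then 1 else 0 := by
  split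
  · next hx =>
    obtain ⟨r, hr, hmem⟩ := exists_blk hm hk i hx
    rw [Finset.card_eq_one]
    refine ⟨blk3 m k i r, ?_⟩
    ext B
    simp only [Finset.mem_filter, Finset.mem_image, Finset.mem_range, Finset.mem_singleton]
    constructor
    · rintro ⟨⟨r', hr', rfl⟩, hxB⟩
      rw [blk3_uniq i hr' hr hxB hmem]
    · rintro rfl
      exact ⟨⟨r, hr, rfl⟩, hmem⟩
  · next hx =>
    rw [Finset.card_eq_zero, Finset.filter_eq_empty_iff]
    rintro B hB
    simp only [Finset.mem_image, Finset.mem_range] at hB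
    obtain ⟨r, hr, rfl⟩ := hB
    intro hxB
    have := blk3_subset i hr hxB
    rw [Finset.mem_range] at this
    omega

theorem spectrum_3way_t1 (k : ℕ) (hk : 2 ≤ k) :
    (∀ m, 2 ≤ m → ∃ (v : ℕ) (V : Finset ℕ) (T : Fin 3 → Finset (Finset ℕ)),
      IsSteinerTrade 3 v k 1 m V T) ∧
    (∀ (v : ℕ) (V : Finset ℕ) (T : Fin 3 → Finset (Finset ℕ)),
      ¬ IsTrade 3 v k 1 1 V T) := by
  constructor
  · intro m hm
    refine ⟨2*m + m*(k-2), Finset.range (2*m + m*(k-2)),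
      fun i => (Finset.range m).image (blk3 m k i), ?_, ?_⟩
    · constructor
      · exact Finset.card_range _
      · intro i
        rw [Finset.card_image_of_injOn, Finset.card_range]
        intro r hr r' hr' h
        exact blk3_inj i (Finset.mem_range.mp hr) (Finset.mem_range.mp hr') h
      · rintro i B hB
        obtain ⟨r, hr, rfl⟩ := Finset.mem_image.mp hB
        exact blk3_subset i (Finset.mem_range.mp hr)
      · rintro i B hB
        obtain ⟨r, hr, rfl⟩ := Finset.mem_image.mp hB
        exact blk3_card hm hk i (Finset.mem_range.mp hr)
      · intro i j hij
        rw [Finset.disjoint_left]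
        rintro B hB hB'
        obtain ⟨r, hr, rfl⟩ := Finset.mem_image.mp hB
        obtain ⟨r', hr', h⟩ := Finset.mem_image.mp hB'
        exact blk3_ne hm (Ne.symm hij) (Finset.mem_range.mp hr') (Finset.mem_range.mp hr) h
      · intro S hS i j
        obtain ⟨x, rfl⟩ := Finset.card_eq_one.mp hS
        simp only [blocksContaining, Finset.singleton_subset_iff]
        rw [count_blk hm hk i x, count_blk hm hk j x]
    · intro S hS i
      obtain ⟨x, rfl⟩ := Finset.card_eq_one.mp hS
      simp only [blocksContaining, Finset.singleton_subset_iff]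
      rw [count_blk hm hk i x]
      split <;> omega
  · rintro v V T h
    obtain ⟨B₀, hB0⟩ := Finset.card_eq_one.mp (h.volume 0)
    obtain ⟨B₁, hB1⟩ := Finset.card_eq_one.mp (h.volume 1)
    have key : B₀ = B₁ := by
      ext x
      have hb := h.balanced {x} (Finset.card_singleton x) 0 1
      rw [hB0, hB1] at hb
      simp only [blocksContaining, Finset.filter_singleton, Finset.singleton_subset_iff] at hb
      split_ifs at hb <;> simp_all
    have hd := h.disj 0 1 (by decide)
    rw [hB0, hB1, ← key, Finset.disjoint_left] at hd
    exact hd (Finset.mem_singleton_self B₀) (Finset.mem_singleton_self B₀)
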